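/- For every non-negative integer L, \(\sum_{j=-\infty}^{\infty} (-1)^j q^{j^2} \left(\frac{j+1}{3}\right) \binom{2L+1}{L+j}_{q^2} = \frac{(q^3;q^6)_L}{(q;q^2)_{L+1}}\,(1-q^{2(1+2L)})\). The sum is finite since the q-binomial coefficient vanishes for |j| > L+1. -/

import Mathlib

open Finset

/-- The finite q-Pochhammer symbol `(a;q)_n`. -/
noncomputable def qPoch (a q : RatFunc ℚ) (n : ℕ) : RatFunc ℚ :=
  ∏ k ∈ Finset.range n, (1 - a * q ^ k)

/-- The q-binomial coefficient `[top choose bot]_q`, zero unless `0 ≤ bot ≤ top`. -/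
noncomputable def qBinom (q : RatFunc ℚ) (top bot : ℤ) : RatFunc ℚ :=
  if 0 ≤ bot ∧ bot ≤ top then
    qPoch q q top.toNat / (qPoch q q bot.toNat * qPoch q q (top - bot).toNat)
  else 0

/-- The Legendre symbol modulo 3. -/
def leg3 (j : ℤ) : ℤ := if j % 3 = 1 then 1 else if j % 3 = 2 then -1 else 0

/-- `1/(q;q)_k`, with the convention that it is zero for negative `k`. -/
noncomputable def invPoch (q : RatFunc ℚ) (k : ℤ) : RatFunc ℚ :=
  if 0 ≤ k then (qPoch q q k.toNat)⁻¹ else 0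

/-- The generic variable `q` in the field of rational functions. -/
noncomputable def Xq : RatFunc ℚ := RatFunc.X

lemma Xq_ne_zero : Xq ≠ 0 := RatFunc.X_ne_zero
lemma one_sub_Xq_pow_ne_zero (m : ℕ) (hm : 0 < m) : (1 : RatFunc ℚ) - Xq ^ m ≠ 0 := by
  intro h
  have h' : (Xq : RatFunc ℚ) ^ m = 1 := by linear_combination -h
  have h2 : (algebraMap (Polynomial ℚ) (RatFunc ℚ)) (Polynomial.X ^ m) = algebraMap (Polynomial ℚ) (RatFunc ℚ) 1 := by
    simpa [Xq, RatFunc.algebraMap_X] using h'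
  have h3 := RatFunc.algebraMap_injective ℚ h2
  have h4 := congrArg (Polynomial.eval 0) h3
  simp [Polynomial.eval_pow, zero_pow hm.ne'] at h4
lemma qPoch_pow_ne_zero (a b : ℕ) (ha : 0 < a) (n : ℕ) : qPoch (Xq^a) (Xq^b) n ≠ 0 := by
  rw [qPoch]
  apply prod_ne_zero_iff.2
  intro k _
  have : (Xq:RatFunc ℚ)^a * (Xq^b)^k = Xq^(a + b*k) := by rw [← pow_mul, ← pow_add]
  rw [this]
  exact one_sub_Xq_pow_ne_zero _ (by omega)
lemma qPoch_succ (a q : RatFunc ℚ) (n : ℕ) : qPoch a q (n+1) = qPoch a q n * (1 - a * q^n) :=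
  prod_range_succ _ _
lemma qBinom_eq_zero_of_neg {q : RatFunc ℚ} {n k : ℤ} (h : k < 0) : qBinom q n k = 0 := by
  rw [qBinom, if_neg]; omega
lemma qBinom_eq_zero_of_gt {q : RatFunc ℚ} {n k : ℤ} (h : n < k) : qBinom q n k = 0 := by
  rw [qBinom, if_neg]; omega
lemma qBinom_nat (q : RatFunc ℚ) (a b : ℕ) :
    qBinom q ((a : ℤ) + b) a = qPoch q q (a+b) / (qPoch q q a * qPoch q q b) := by
  rw [qBinom, if_pos (by omega)]
  have h1 : ((a:ℤ)+b).toNat = a + b := by omega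
  have h2 : ((a:ℤ)).toNat = a := by omega
  have h3 : ((a:ℤ)+b-a).toNat = b := by omega
  rw [h1, h2, h3]

noncomputable abbrev Q2 : RatFunc ℚ := Xq^2
noncomputable abbrev P2 (m : ℕ) : RatFunc ℚ := qPoch Q2 Q2 m
lemma qPoch_zero (a q : RatFunc ℚ) : qPoch a q 0 = 1 := Finset.prod_range_zero _
lemma P2_succ (n : ℕ) : P2 (n+1) = P2 n * (1 - Q2^(n+1)) := by
  rw [show P2 (n+1) = qPoch Q2 Q2 (n+1) from rfl, qPoch_succ, ← pow_succ']
lemma P2_ne_zero (m : ℕ) : P2 m ≠ 0 := qPoch_pow_ne_zero 2 2 (by norm_num) m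
lemma one_sub_Q2_pow_ne_zero (m : ℕ) (hm : 0 < m) : (1:RatFunc ℚ) - Q2^m ≠ 0 := by
  rw [← pow_mul]; exact one_sub_Xq_pow_ne_zero _ (by omega)

lemma qBinom_zero_bot (n : ℕ) : qBinom Q2 (n:ℤ) 0 = 1 := by
  have := qBinom_nat Q2 0 n
  norm_num at this
  rw [this, qPoch_zero]
  simp [div_self (P2_ne_zero n)]
lemma qBinom_self (n : ℕ) : qBinom Q2 (n:ℤ) n = 1 := by
  have := qBinom_nat Q2 n 0
  norm_num at this
  rw [this, qPoch_zero]
  simp [div_self (P2_ne_zero n)]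

lemma pascal1_nat (a b : ℕ) :
    P2 (a+b+2) / (P2 (a+1) * P2 (b+1)) =
      P2 (a+b+1) / (P2 (a+1) * P2 b) + Q2^(b+1) * (P2 (a+b+1) / (P2 a * P2 (b+1))) := by
  have e1 : P2 (a+b+2) = P2 (a+b+1) * (1 - Q2^(a+b+2)) := by
    rw [show a+b+2 = (a+b+1)+1 by ring]; exact P2_succ _
  have e2 := P2_succ a
  have e3 := P2_succ b
  rw [e1, e2, e3]
  have h1 := P2_ne_zero a
  have h2 := P2_ne_zero b
  have h3 := one_sub_Q2_pow_ne_zero (a+1) (by omega)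
  have h4 := one_sub_Q2_pow_ne_zero (b+1) (by omega)
  field_simp
  ring

lemma pascal2_nat (a b : ℕ) :
    P2 (a+b+2) / (P2 (a+1) * P2 (b+1)) =
      Q2^(a+1) * (P2 (a+b+1) / (P2 (a+1) * P2 b)) + P2 (a+b+1) / (P2 a * P2 (b+1)) := by
  have e1 : P2 (a+b+2) = P2 (a+b+1) * (1 - Q2^(a+b+2)) := by
    rw [show a+b+2 = (a+b+1)+1 by ring]; exact P2_succ _
  have e2 := P2_succ a
  have e3 := P2_succ b
  rw [e1, e2, e3]
  have h1 := P2_ne_zero a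
  have h2 := P2_ne_zero b
  have h3 := one_sub_Q2_pow_ne_zero (a+1) (by omega)
  have h4 := one_sub_Q2_pow_ne_zero (b+1) (by omega)
  field_simp
  ring

lemma Q2_ne_zero : (Q2 : RatFunc ℚ) ≠ 0 := pow_ne_zero _ Xq_ne_zero

lemma qBinom_cast (a b : ℕ) : qBinom Q2 ((a:ℤ)+b) a = P2 (a+b) / (P2 a * P2 b) := qBinom_nat _ a b

lemma pascal1 (n : ℕ) (k : ℤ) :
    qBinom Q2 ((n:ℤ)+1) k = qBinom Q2 n k + Q2^((n:ℤ)+1-k) * qBinom Q2 n (k-1) := by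
  rcases lt_or_ge k 0 with hk | hk
  · rw [qBinom_eq_zero_of_neg hk, qBinom_eq_zero_of_neg hk, qBinom_eq_zero_of_neg (by omega)]
    ring
  rcases eq_or_lt_of_le hk with hk0 | hkpos
  · -- k = 0
    rw [← hk0, qBinom_eq_zero_of_neg (show (0:ℤ)-1 < 0 by norm_num)]
    have h1 : ((n:ℤ)+1) = ((n+1:ℕ):ℤ) := by push_cast; ring
    rw [h1, qBinom_zero_bot, qBinom_zero_bot]
    ring
  rcases lt_or_ge (n:ℤ) k with hk2 | hk2
  · -- k ≥ n+1
    by_cases hk3 : k = (n:ℤ)+1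
    · subst hk3
      have h1 : ((n:ℤ)+1) = ((n+1:ℕ):ℤ) := by push_cast; ring
      rw [qBinom_eq_zero_of_gt (show (n:ℤ) < (n:ℤ)+1 by omega),
        show (n:ℤ)+1-((n:ℤ)+1) = (0:ℤ) by ring, zpow_zero,
        show (n:ℤ)+1-1 = ((n:ℕ):ℤ) by ring, qBinom_self, h1, qBinom_self]
      ring
    · rw [qBinom_eq_zero_of_gt (show (n:ℤ)+1 < k by omega),
        qBinom_eq_zero_of_gt (show (n:ℤ) < k by omega),
        qBinom_eq_zero_of_gt (show (n:ℤ) < k-1 by omega)]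
      ring
  · -- 1 ≤ k ≤ n
    obtain ⟨a, ha⟩ : ∃ a : ℕ, k = (a:ℤ)+1 := ⟨(k-1).toNat, by omega⟩
    obtain ⟨b, hb⟩ : ∃ b : ℕ, (n:ℤ) = (a:ℤ)+1+b := ⟨((n:ℤ)-k).toNat, by omega⟩
    have e1 : qBinom Q2 ((n:ℤ)+1) k = P2 ((a+1)+(b+1)) / (P2 (a+1) * P2 (b+1)) := by
      have := qBinom_cast (a+1) (b+1)
      rw [show (((a+1:ℕ)):ℤ) + ((b+1:ℕ):ℤ) = (n:ℤ)+1 by push_cast; omega] at this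
      rw [show ((a+1:ℕ):ℤ) = k by push_cast; omega] at this
      exact this
    have e2 : qBinom Q2 (n:ℤ) k = P2 ((a+1)+b) / (P2 (a+1) * P2 b) := by
      have := qBinom_cast (a+1) b
      rw [show (((a+1:ℕ)):ℤ) + ((b:ℕ):ℤ) = (n:ℤ) by push_cast; omega] at this
      rw [show ((a+1:ℕ):ℤ) = k by push_cast; omega] at this
      exact this
    have e3 : qBinom Q2 (n:ℤ) (k-1) = P2 (a+(b+1)) / (P2 a * P2 (b+1)) := by
      have := qBinom_cast a (b+1)
      rw [show ((a:ℕ):ℤ) + ((b+1:ℕ):ℤ) = (n:ℤ) by push_cast; omega] at this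
      rw [show ((a:ℕ):ℤ) = k-1 by omega] at this
      exact this
    have e4 : (Q2:RatFunc ℚ)^((n:ℤ)+1-k) = Q2^(b+1) := by
      rw [show (n:ℤ)+1-k = ((b+1:ℕ):ℤ) by push_cast; omega, zpow_natCast]
    rw [e1, e2, e3, e4]
    have := pascal1_nat a b
    rw [show a+b+2 = (a+1)+(b+1) by ring, show a+b+1 = (a+1)+b by ring] at this
    rw [this, show a+(b+1) = (a+1)+b by ring]

lemma pascal2 (n : ℕ) (k : ℤ) :
    qBinom Q2 ((n:ℤ)+1) k = Q2^k * qBinom Q2 n k + qBinom Q2 n (k-1) := by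
  rcases lt_or_ge k 0 with hk | hk
  · rw [qBinom_eq_zero_of_neg hk, qBinom_eq_zero_of_neg hk, qBinom_eq_zero_of_neg (by omega)]
    ring
  rcases eq_or_lt_of_le hk with hk0 | hkpos
  · rw [← hk0, qBinom_eq_zero_of_neg (show (0:ℤ)-1 < 0 by norm_num)]
    have h1 : ((n:ℤ)+1) = ((n+1:ℕ):ℤ) := by push_cast; ring
    rw [h1, qBinom_zero_bot, qBinom_zero_bot]
    simp
  rcases lt_or_ge (n:ℤ) k with hk2 | hk2
  · by_cases hk3 : k = (n:ℤ)+1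
    · subst hk3
      have h1 : ((n:ℤ)+1) = ((n+1:ℕ):ℤ) := by push_cast; ring
      rw [qBinom_eq_zero_of_gt (show (n:ℤ) < (n:ℤ)+1 by omega),
        show (n:ℤ)+1-1 = ((n:ℕ):ℤ) by ring, qBinom_self, h1, qBinom_self]
      ring
    · rw [qBinom_eq_zero_of_gt (show (n:ℤ)+1 < k by omega),
        qBinom_eq_zero_of_gt (show (n:ℤ) < k by omega),
        qBinom_eq_zero_of_gt (show (n:ℤ) < k-1 by omega)]
      ring
  · obtain ⟨a, ha⟩ : ∃ a : ℕ, k = (a:ℤ)+1 := ⟨(k-1).toNat, by omega⟩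
    obtain ⟨b, hb⟩ : ∃ b : ℕ, (n:ℤ) = (a:ℤ)+1+b := ⟨((n:ℤ)-k).toNat, by omega⟩
    have e1 : qBinom Q2 ((n:ℤ)+1) k = P2 ((a+1)+(b+1)) / (P2 (a+1) * P2 (b+1)) := by
      have := qBinom_cast (a+1) (b+1)
      rw [show (((a+1:ℕ)):ℤ) + ((b+1:ℕ):ℤ) = (n:ℤ)+1 by push_cast; omega] at this
      rw [show ((a+1:ℕ):ℤ) = k by push_cast; omega] at this
      exact this
    have e2 : qBinom Q2 (n:ℤ) k = P2 ((a+1)+b) / (P2 (a+1) * P2 b) := by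
      have := qBinom_cast (a+1) b
      rw [show (((a+1:ℕ)):ℤ) + ((b:ℕ):ℤ) = (n:ℤ) by push_cast; omega] at this
      rw [show ((a+1:ℕ):ℤ) = k by push_cast; omega] at this
      exact this
    have e3 : qBinom Q2 (n:ℤ) (k-1) = P2 (a+(b+1)) / (P2 a * P2 (b+1)) := by
      have := qBinom_cast a (b+1)
      rw [show ((a:ℕ):ℤ) + ((b+1:ℕ):ℤ) = (n:ℤ) by push_cast; omega] at this
      rw [show ((a:ℕ):ℤ) = k-1 by omega] at this
      exact this
    have e4 : (Q2:RatFunc ℚ)^(k:ℤ) = Q2^(a+1) := by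
      rw [show (k:ℤ) = ((a+1:ℕ):ℤ) by push_cast; omega, zpow_natCast]
    rw [e1, e2, e3, e4]
    have := pascal2_nat a b
    rw [show a+b+2 = (a+1)+(b+1) by ring, show a+b+1 = (a+1)+b by ring] at this
    rw [this, show a+(b+1) = (a+1)+b by ring]

lemma qBinom_symm (n k : ℤ) : qBinom Q2 n k = qBinom Q2 n (n - k) := by
  by_cases h : 0 ≤ k ∧ k ≤ n
  · rw [qBinom, if_pos h, qBinom, if_pos (by omega)]
    rw [show n - (n-k) = k by ring]
    rw [mul_comm]
  · rw [qBinom, if_neg h, qBinom, if_neg (by omega)]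
lemma leg3_neg (j : ℤ) : leg3 (-j) = -leg3 j := by unfold leg3; split_ifs <;> omega
lemma leg3_two_sub (j : ℤ) : leg3 (2-j) = -leg3 (j+1) := by unfold leg3; split_ifs <;> omega

lemma sum_Icc_ext (f : ℤ → RatFunc ℚ) {a b a' b' : ℤ} (hsub : Icc a b ⊆ Icc a' b')
    (h : ∀ j, j < a ∨ b < j → f j = 0) :
    ∑ j ∈ Icc a' b', f j = ∑ j ∈ Icc a b, f j := by
  refine (Finset.sum_subset hsub ?_).symm
  intro x hx hx2
  apply h
  simp only [Finset.mem_Icc] at hx hx2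
  omega

lemma sum_neg (f : ℤ → RatFunc ℚ) (M : ℤ) :
    ∑ j ∈ Icc (-M) M, f j = ∑ j ∈ Icc (-M) M, f (-j) := by
  refine Finset.sum_equiv (Equiv.neg ℤ) ?_ ?_
  · intro i; simp only [Equiv.neg_apply, Finset.mem_Icc]; omega
  · intro i _; simp

lemma sum_shift (f : ℤ → RatFunc ℚ) (a b c : ℤ) :
    ∑ j ∈ Icc a b, f j = ∑ j ∈ Icc (a+c) (b+c), f (j - c) := by
  refine Finset.sum_equiv (Equiv.addRight c) ?_ ?_
  · intro i; simp only [Equiv.coe_addRight, Finset.mem_Icc]; omega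
  · intro i _; simp

lemma neg_one_zpow_neg (j : ℤ) : ((-1 : RatFunc ℚ))^(-j) = (-1)^j := by
  rw [zpow_neg]
  rcases Int.even_or_odd j with h | h
  · rw [h.neg_one_zpow]; norm_num
  · rw [h.neg_one_zpow]; norm_num

lemma neg_one_zpow_add_one (j : ℤ) : ((-1 : RatFunc ℚ))^(j+1) = -(-1)^j := by
  rw [zpow_add₀ (by norm_num : (-1:RatFunc ℚ) ≠ 0), zpow_one]; ring

lemma ratfunc_two_ne_zero : (2 : RatFunc ℚ) ≠ 0 := by
  have : (algebraMap (Polynomial ℚ) (RatFunc ℚ)) 2 ≠ 0 := by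
    rw [ne_eq, FaithfulSMul.algebraMap_eq_zero_iff]
    norm_num
  rwa [map_ofNat] at this

lemma Xq_zpow_add (a b : ℤ) : Xq^(a+b) = Xq^a * Xq^b := zpow_add₀ Xq_ne_zero a b

lemma T0_eq_zero (L : ℕ) (M : ℤ) :
    ∑ j ∈ Icc (-M) M, (-1:RatFunc ℚ)^j * Xq^(j^2) * ((leg3 j : ℤ) : RatFunc ℚ)
      * qBinom Q2 (2*(L:ℤ)) ((L:ℤ)+j) = 0 := by
  set g : ℤ → RatFunc ℚ := fun j => (-1:RatFunc ℚ)^j * Xq^(j^2) * ((leg3 j : ℤ) : RatFunc ℚ)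
      * qBinom Q2 (2*(L:ℤ)) ((L:ℤ)+j) with hg
  have key : ∀ j : ℤ, g (-j) = - g j := by
    intro j
    rw [hg]
    simp only
    rw [neg_one_zpow_neg, show (-j)^2 = j^2 from neg_sq j, leg3_neg,
      show (L:ℤ) + -j = 2*(L:ℤ) - ((L:ℤ)+j) by ring, ← qBinom_symm]
    push_cast
    ring
  have h := sum_neg g M
  have h2 : ∑ j ∈ Icc (-M) M, g (-j) = - ∑ j ∈ Icc (-M) M, g j := by
    rw [← Finset.sum_neg_distrib]
    exact Finset.sum_congr rfl (fun j _ => key j)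
  have h3 : (∑ j ∈ Icc (-M) M, g j) = - ∑ j ∈ Icc (-M) M, g j := by
    conv_lhs => rw [h, h2]
  have h4 : (2 : RatFunc ℚ) * ∑ j ∈ Icc (-M) M, g j = 0 := by
    rw [two_mul]; nth_rewrite 2 [h3]; ring
  rcases mul_eq_zero.1 h4 with h5 | h5
  · exact absurd h5 ratfunc_two_ne_zero
  · exact h5

noncomputable def FF (j : ℤ) : RatFunc ℚ := (-1:RatFunc ℚ)^j * Xq^(j^2) * ((leg3 (j+1) : ℤ) : RatFunc ℚ)

noncomputable def Ssum (L : ℕ) : RatFunc ℚ :=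
  ∑ j ∈ Icc (-(L:ℤ)-1) ((L:ℤ)+1), FF j * qBinom Q2 (2*(L:ℤ)+1) ((L:ℤ)+j)
noncomputable def Tsum (L : ℕ) : RatFunc ℚ :=
  ∑ j ∈ Icc (-(L:ℤ)-1) ((L:ℤ)+1), FF j * qBinom Q2 (2*(L:ℤ)) ((L:ℤ)+j)

lemma Q2_zpow (m : ℤ) : (Q2:RatFunc ℚ)^m = Xq^(2*m) := by
  rw [show (Q2:RatFunc ℚ) = Xq^(2:ℤ) by rw [show ((2:ℤ)) = ((2:ℕ):ℤ) by norm_num, zpow_natCast],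
    ← zpow_mul]

lemma Xq_zpow_eq (a b : ℤ) (h : a = b) : Xq^a = Xq^b := by rw [h]

lemma weight1 (L : ℕ) (j : ℤ) :
    FF (j+1) * Q2^((L:ℤ)-j) =
      Xq^(2*(L:ℤ)+1) * ((-1:RatFunc ℚ)^(j+1) * Xq^(j^2) * ((leg3 (j+2) : ℤ) : RatFunc ℚ)) := by
  rw [FF, Q2_zpow, show (j:ℤ)+1+1 = j+2 by ring]
  have : (Xq:RatFunc ℚ)^(((j:ℤ)+1)^2) * Xq^(2*((L:ℤ)-j)) = Xq^(2*(L:ℤ)+1) * Xq^(j^2) := by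
    rw [← Xq_zpow_add, ← Xq_zpow_add]
    exact Xq_zpow_eq _ _ (by ring)
  calc (-1:RatFunc ℚ)^(j+1) * Xq^((j+1)^2) * ((leg3 (j+2) : ℤ) : RatFunc ℚ) * Xq^(2*((L:ℤ)-j))
      = (Xq^(((j:ℤ)+1)^2) * Xq^(2*((L:ℤ)-j))) * ((-1:RatFunc ℚ)^(j+1) * ((leg3 (j+2) : ℤ) : RatFunc ℚ)) := by ring
    _ = _ := by rw [this]; ring

lemma lemB (L : ℕ) : Ssum L = (1 + Xq^(2*(L:ℤ)+1)) * Tsum L := by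
  have step1 : Ssum L = Tsum L +
      ∑ j ∈ Icc (-(L:ℤ)-1) ((L:ℤ)+1), FF j * (Q2^((L:ℤ)+1-j) * qBinom Q2 (2*(L:ℤ)) ((L:ℤ)+j-1)) := by
    rw [Ssum, Tsum, ← Finset.sum_add_distrib]
    refine Finset.sum_congr rfl (fun j _ => ?_)
    have hp := pascal1 (2*L) ((L:ℤ)+j)
    rw [show ((2*L:ℕ):ℤ) = 2*(L:ℤ) by push_cast; ring] at hp
    rw [hp, show 2*(L:ℤ)+1-((L:ℤ)+j) = (L:ℤ)+1-j by ring]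
    ring
  have step2 : ∑ j ∈ Icc (-(L:ℤ)-1) ((L:ℤ)+1), FF j * (Q2^((L:ℤ)+1-j) * qBinom Q2 (2*(L:ℤ)) ((L:ℤ)+j-1))
      = Xq^(2*(L:ℤ)+1) * ∑ j ∈ Icc (-(L:ℤ)-1) ((L:ℤ)+1),
          (-1:RatFunc ℚ)^(j+1) * Xq^(j^2) * ((leg3 (j+2) : ℤ) : RatFunc ℚ) * qBinom Q2 (2*(L:ℤ)) ((L:ℤ)+j) := by
    rw [sum_shift _ _ _ (-1)]
    have hcong : ∀ j ∈ Icc (-(L:ℤ)-1 + -1) ((L:ℤ)+1 + -1),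
        FF (j - -1) * (Q2^((L:ℤ)+1-(j - -1)) * qBinom Q2 (2*(L:ℤ)) ((L:ℤ)+(j - -1)-1))
        = Xq^(2*(L:ℤ)+1) * ((-1:RatFunc ℚ)^(j+1) * Xq^(j^2) * ((leg3 (j+2) : ℤ) : RatFunc ℚ)
            * qBinom Q2 (2*(L:ℤ)) ((L:ℤ)+j)) := by
      intro j _
      rw [show j - -1 = j + 1 by ring, show (L:ℤ)+1-(j+1) = (L:ℤ)-j by ring,
        show (L:ℤ)+(j+1)-1 = (L:ℤ)+j by ring]
      calc FF (j+1) * (Q2^((L:ℤ)-j) * qBinom Q2 (2*(L:ℤ)) ((L:ℤ)+j))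
          = (FF (j+1) * Q2^((L:ℤ)-j)) * qBinom Q2 (2*(L:ℤ)) ((L:ℤ)+j) := by ring
        _ = _ := by rw [weight1]; ring
    rw [Finset.sum_congr rfl hcong]
    set G : ℤ → RatFunc ℚ := fun j => Xq^(2*(L:ℤ)+1) * ((-1:RatFunc ℚ)^(j+1) * Xq^(j^2)
        * ((leg3 (j+2) : ℤ) : RatFunc ℚ) * qBinom Q2 (2*(L:ℤ)) ((L:ℤ)+j)) with hG
    have hGzero : ∀ j : ℤ, j < -(L:ℤ) ∨ (L:ℤ) < j → G j = 0 := by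
      intro j hj
      rw [hG]
      simp only
      rcases hj with h | h
      · rw [qBinom_eq_zero_of_neg (by omega)]; ring
      · rw [qBinom_eq_zero_of_gt (by omega)]; ring
    rw [sum_Icc_ext G (show Icc (-(L:ℤ)) ((L:ℤ)) ⊆ Icc (-(L:ℤ)-1 + -1) ((L:ℤ)+1 + -1) by
        intro x; simp only [Finset.mem_Icc]; omega) hGzero]
    rw [← sum_Icc_ext G (show Icc (-(L:ℤ)) ((L:ℤ)) ⊆ Icc (-(L:ℤ)-1) ((L:ℤ)+1) by
        intro x; simp only [Finset.mem_Icc]; omega) hGzero]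
    rw [hG, ← Finset.mul_sum]
  have step3 : ∑ j ∈ Icc (-(L:ℤ)-1) ((L:ℤ)+1),
      (-1:RatFunc ℚ)^(j+1) * Xq^(j^2) * ((leg3 (j+2) : ℤ) : RatFunc ℚ) * qBinom Q2 (2*(L:ℤ)) ((L:ℤ)+j)
      = Tsum L := by
    rw [show -(L:ℤ)-1 = -((L:ℤ)+1) by ring, sum_neg]
    rw [Tsum, show -(L:ℤ)-1 = -((L:ℤ)+1) by ring]
    refine Finset.sum_congr rfl (fun j _ => ?_)
    rw [show -j+1 = -(j-1) by ring, neg_one_zpow_neg, show (-j)^2 = j^2 from neg_sq j,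
      show -j+2 = -(j-2) by ring, show leg3 (-(j-2)) = -leg3 (j-2) from leg3_neg _,
      show (L:ℤ) + -j = 2*(L:ℤ) - ((L:ℤ)+j) by ring, ← qBinom_symm]
    rw [FF]
    have : leg3 (j-2) = leg3 (j+1) := by unfold leg3; split_ifs <;> omega
    rw [this]
    have : ((-1:RatFunc ℚ))^(j-1) = -(-1)^j := by
      rw [show j-1 = j + (-1) by ring, zpow_add₀ (by norm_num : (-1:RatFunc ℚ) ≠ 0)]
      norm_num
    rw [this]
    push_cast
    ring
  rw [step1, step2, step3]
  ring

noncomputable def Usum (L : ℕ) : RatFunc ℚ :=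
  ∑ j ∈ Icc (-(L:ℤ)-1) ((L:ℤ)+1),
    (-1:RatFunc ℚ)^j * Xq^(j^2) * ((leg3 j : ℤ) : RatFunc ℚ) * qBinom Q2 (2*(L:ℤ)+1) ((L:ℤ)+j)

lemma weight2 (L : ℕ) (j : ℤ) :
    (-1:RatFunc ℚ)^(j+1) * Xq^((j+1)^2) * ((leg3 (j+1) : ℤ) : RatFunc ℚ) * Q2^((L:ℤ)-j)
      = -(Xq^(2*(L:ℤ)+1) * FF j) := by
  rw [FF, Q2_zpow, neg_one_zpow_add_one]
  have : (Xq:RatFunc ℚ)^(((j:ℤ)+1)^2) * Xq^(2*((L:ℤ)-j)) = Xq^(2*(L:ℤ)+1) * Xq^(j^2) := by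
    rw [← Xq_zpow_add, ← Xq_zpow_add]
    exact Xq_zpow_eq _ _ (by ring)
  calc -(-1:RatFunc ℚ)^j * Xq^((j+1)^2) * ((leg3 (j+1) : ℤ) : RatFunc ℚ) * Xq^(2*((L:ℤ)-j))
      = (Xq^(((j:ℤ)+1)^2) * Xq^(2*((L:ℤ)-j))) * (-(-1:RatFunc ℚ)^j * ((leg3 (j+1) : ℤ) : RatFunc ℚ)) := by ring
    _ = _ := by rw [this]; ring

lemma weight3 (L : ℕ) (j : ℤ) :
    FF (j-1) * Q2^((L:ℤ)+j)
      = -(Xq^(2*(L:ℤ)+1) * ((-1:RatFunc ℚ)^j * Xq^(j^2) * ((leg3 j : ℤ) : RatFunc ℚ))) := by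
  rw [FF, Q2_zpow, show (j:ℤ)-1+1 = j by ring]
  have h1 : ((-1:RatFunc ℚ))^(j-1) = -(-1)^j := by
    rw [show j-1 = j + (-1) by ring, zpow_add₀ (by norm_num : (-1:RatFunc ℚ) ≠ 0)]
    norm_num
  have : (Xq:RatFunc ℚ)^(((j:ℤ)-1)^2) * Xq^(2*((L:ℤ)+j)) = Xq^(2*(L:ℤ)+1) * Xq^(j^2) := by
    rw [← Xq_zpow_add, ← Xq_zpow_add]
    exact Xq_zpow_eq _ _ (by ring)
  rw [h1]
  calc -(-1:RatFunc ℚ)^j * Xq^((j-1)^2) * ((leg3 j : ℤ) : RatFunc ℚ) * Xq^(2*((L:ℤ)+j))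
      = (Xq^(((j:ℤ)-1)^2) * Xq^(2*((L:ℤ)+j))) * (-(-1:RatFunc ℚ)^j * ((leg3 j : ℤ) : RatFunc ℚ)) := by ring
    _ = _ := by rw [this]; ring

lemma Usum_eq (L : ℕ) : Usum L = -(Xq^(2*(L:ℤ)+1) * Tsum L) := by
  have step1 : Usum L =
      (∑ j ∈ Icc (-(L:ℤ)-1) ((L:ℤ)+1),
        (-1:RatFunc ℚ)^j * Xq^(j^2) * ((leg3 j : ℤ) : RatFunc ℚ) * qBinom Q2 (2*(L:ℤ)) ((L:ℤ)+j)) +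
      ∑ j ∈ Icc (-(L:ℤ)-1) ((L:ℤ)+1),
        (-1:RatFunc ℚ)^j * Xq^(j^2) * ((leg3 j : ℤ) : RatFunc ℚ)
          * (Q2^((L:ℤ)+1-j) * qBinom Q2 (2*(L:ℤ)) ((L:ℤ)+j-1)) := by
    rw [Usum, ← Finset.sum_add_distrib]
    refine Finset.sum_congr rfl (fun j _ => ?_)
    have hp := pascal1 (2*L) ((L:ℤ)+j)
    rw [show ((2*L:ℕ):ℤ) = 2*(L:ℤ) by push_cast; ring] at hp
    rw [hp, show 2*(L:ℤ)+1-((L:ℤ)+j) = (L:ℤ)+1-j by ring]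
    ring
  have hzero : (∑ j ∈ Icc (-(L:ℤ)-1) ((L:ℤ)+1),
      (-1:RatFunc ℚ)^j * Xq^(j^2) * ((leg3 j : ℤ) : RatFunc ℚ) * qBinom Q2 (2*(L:ℤ)) ((L:ℤ)+j)) = 0 := by
    have := T0_eq_zero L ((L:ℤ)+1)
    rwa [show -((L:ℤ)+1) = -(L:ℤ)-1 by ring] at this
  have step2 : ∑ j ∈ Icc (-(L:ℤ)-1) ((L:ℤ)+1),
      (-1:RatFunc ℚ)^j * Xq^(j^2) * ((leg3 j : ℤ) : RatFunc ℚ)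
        * (Q2^((L:ℤ)+1-j) * qBinom Q2 (2*(L:ℤ)) ((L:ℤ)+j-1))
      = -(Xq^(2*(L:ℤ)+1) * Tsum L) := by
    rw [sum_shift _ _ _ (-1)]
    have hcong : ∀ j ∈ Icc (-(L:ℤ)-1 + -1) ((L:ℤ)+1 + -1),
        (-1:RatFunc ℚ)^(j - -1) * Xq^((j - -1)^2) * ((leg3 (j - -1) : ℤ) : RatFunc ℚ)
          * (Q2^((L:ℤ)+1-(j - -1)) * qBinom Q2 (2*(L:ℤ)) ((L:ℤ)+(j - -1)-1))
        = -(Xq^(2*(L:ℤ)+1) * (FF j * qBinom Q2 (2*(L:ℤ)) ((L:ℤ)+j))) := by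
      intro j _
      rw [show j - -1 = j + 1 by ring, show (L:ℤ)+1-(j+1) = (L:ℤ)-j by ring,
        show (L:ℤ)+(j+1)-1 = (L:ℤ)+j by ring]
      calc (-1:RatFunc ℚ)^(j+1) * Xq^((j+1)^2) * ((leg3 (j+1) : ℤ) : RatFunc ℚ)
            * (Q2^((L:ℤ)-j) * qBinom Q2 (2*(L:ℤ)) ((L:ℤ)+j))
          = ((-1:RatFunc ℚ)^(j+1) * Xq^((j+1)^2) * ((leg3 (j+1) : ℤ) : RatFunc ℚ) * Q2^((L:ℤ)-j))
              * qBinom Q2 (2*(L:ℤ)) ((L:ℤ)+j) := by ring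
        _ = _ := by rw [weight2]; ring
    rw [Finset.sum_congr rfl hcong]
    set G : ℤ → RatFunc ℚ := fun j => -(Xq^(2*(L:ℤ)+1) * (FF j * qBinom Q2 (2*(L:ℤ)) ((L:ℤ)+j))) with hG
    have hGzero : ∀ j : ℤ, j < -(L:ℤ) ∨ (L:ℤ) < j → G j = 0 := by
      intro j hj
      rw [hG]
      simp only
      rcases hj with h | h
      · rw [qBinom_eq_zero_of_neg (by omega)]; ring
      · rw [qBinom_eq_zero_of_gt (by omega)]; ring
    rw [sum_Icc_ext G (show Icc (-(L:ℤ)) ((L:ℤ)) ⊆ Icc (-(L:ℤ)-1 + -1) ((L:ℤ)+1 + -1) by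
        intro x; simp only [Finset.mem_Icc]; omega) hGzero]
    rw [← sum_Icc_ext G (show Icc (-(L:ℤ)) ((L:ℤ)) ⊆ Icc (-(L:ℤ)-1) ((L:ℤ)+1) by
        intro x; simp only [Finset.mem_Icc]; omega) hGzero]
    rw [hG, Tsum]
    simp only
    rw [Finset.mul_sum, ← Finset.sum_neg_distrib]
  rw [step1, hzero, step2, zero_add]

lemma lemD (L : ℕ) : Tsum (L+1) = (1 + Xq^(2*(L:ℤ)+1) + Xq^(2*(L:ℤ)+1) * Xq^(2*(L:ℤ)+1)) * Tsum L := by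
  have hT : Tsum (L+1) = ∑ j ∈ Icc (-(L:ℤ)-2) ((L:ℤ)+2), FF j * qBinom Q2 (2*(L:ℤ)+1+1) ((L:ℤ)+1+j) := by
    rw [Tsum]
    rw [show -((L+1:ℕ):ℤ)-1 = -(L:ℤ)-2 by push_cast; ring,
      show ((L+1:ℕ):ℤ)+1 = (L:ℤ)+2 by push_cast; ring]
    refine Finset.sum_congr rfl (fun j _ => ?_)
    rw [show 2*((L+1:ℕ):ℤ) = 2*(L:ℤ)+1+1 by push_cast; ring,
      show ((L+1:ℕ):ℤ)+j = (L:ℤ)+1+j by push_cast; ring]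
  have hsplit : Tsum (L+1) =
      (∑ j ∈ Icc (-(L:ℤ)-2) ((L:ℤ)+2), FF j * (Q2^((L:ℤ)+1+j) * qBinom Q2 (2*(L:ℤ)+1) ((L:ℤ)+1+j))) +
      ∑ j ∈ Icc (-(L:ℤ)-2) ((L:ℤ)+2), FF j * qBinom Q2 (2*(L:ℤ)+1) ((L:ℤ)+j) := by
    rw [hT, ← Finset.sum_add_distrib]
    refine Finset.sum_congr rfl (fun j _ => ?_)
    have hp := pascal2 (2*L+1) ((L:ℤ)+1+j)
    rw [show ((2*L+1:ℕ):ℤ) = 2*(L:ℤ)+1 by push_cast; ring] at hp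
    rw [hp, show (L:ℤ)+1+j-1 = (L:ℤ)+j by ring]
    ring
  -- second piece is Ssum L
  have hsecond : ∑ j ∈ Icc (-(L:ℤ)-2) ((L:ℤ)+2), FF j * qBinom Q2 (2*(L:ℤ)+1) ((L:ℤ)+j) = Ssum L := by
    set G : ℤ → RatFunc ℚ := fun j => FF j * qBinom Q2 (2*(L:ℤ)+1) ((L:ℤ)+j) with hG
    have hGzero : ∀ j : ℤ, j < -(L:ℤ) ∨ (L:ℤ)+1 < j → G j = 0 := by
      intro j hj
      rw [hG]
      simp only
      rcases hj with h | h
      · rw [qBinom_eq_zero_of_neg (by omega)]; ring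
      · rw [qBinom_eq_zero_of_gt (by omega)]; ring
    rw [sum_Icc_ext G (show Icc (-(L:ℤ)) ((L:ℤ)+1) ⊆ Icc (-(L:ℤ)-2) ((L:ℤ)+2) by
        intro x; simp only [Finset.mem_Icc]; omega) hGzero]
    rw [Ssum, sum_Icc_ext G (show Icc (-(L:ℤ)) ((L:ℤ)+1) ⊆ Icc (-(L:ℤ)-1) ((L:ℤ)+1) by
        intro x; simp only [Finset.mem_Icc]; omega) hGzero]
  -- first piece
  have hfirst : ∑ j ∈ Icc (-(L:ℤ)-2) ((L:ℤ)+2), FF j * (Q2^((L:ℤ)+1+j) * qBinom Q2 (2*(L:ℤ)+1) ((L:ℤ)+1+j))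
      = Xq^(2*(L:ℤ)+1) * Xq^(2*(L:ℤ)+1) * Tsum L := by
    rw [sum_shift _ _ _ 1]
    have hcong : ∀ j ∈ Icc (-(L:ℤ)-2+1) ((L:ℤ)+2+1),
        FF (j-1) * (Q2^((L:ℤ)+1+(j-1)) * qBinom Q2 (2*(L:ℤ)+1) ((L:ℤ)+1+(j-1)))
        = -(Xq^(2*(L:ℤ)+1) * ((-1:RatFunc ℚ)^j * Xq^(j^2) * ((leg3 j : ℤ) : RatFunc ℚ)
            * qBinom Q2 (2*(L:ℤ)+1) ((L:ℤ)+j))) := by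
      intro j _
      rw [show (L:ℤ)+1+(j-1) = (L:ℤ)+j by ring]
      calc FF (j-1) * (Q2^((L:ℤ)+j) * qBinom Q2 (2*(L:ℤ)+1) ((L:ℤ)+j))
          = (FF (j-1) * Q2^((L:ℤ)+j)) * qBinom Q2 (2*(L:ℤ)+1) ((L:ℤ)+j) := by ring
        _ = _ := by rw [weight3]; ring
    rw [Finset.sum_congr rfl hcong]
    set G : ℤ → RatFunc ℚ := fun j => -(Xq^(2*(L:ℤ)+1) * ((-1:RatFunc ℚ)^j * Xq^(j^2)
        * ((leg3 j : ℤ) : RatFunc ℚ) * qBinom Q2 (2*(L:ℤ)+1) ((L:ℤ)+j))) with hG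
    have hGzero : ∀ j : ℤ, j < -(L:ℤ) ∨ (L:ℤ)+1 < j → G j = 0 := by
      intro j hj
      rw [hG]
      simp only
      rcases hj with h | h
      · rw [qBinom_eq_zero_of_neg (by omega)]; ring
      · rw [qBinom_eq_zero_of_gt (by omega)]; ring
    rw [sum_Icc_ext G (show Icc (-(L:ℤ)) ((L:ℤ)+1) ⊆ Icc (-(L:ℤ)-2+1) ((L:ℤ)+2+1) by
        intro x; simp only [Finset.mem_Icc]; omega) hGzero]
    rw [← sum_Icc_ext G (show Icc (-(L:ℤ)) ((L:ℤ)+1) ⊆ Icc (-(L:ℤ)-1) ((L:ℤ)+1) by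
        intro x; simp only [Finset.mem_Icc]; omega) hGzero]
    have : ∑ j ∈ Icc (-(L:ℤ)-1) ((L:ℤ)+1), G j = -(Xq^(2*(L:ℤ)+1) * Usum L) := by
      rw [hG, Usum]
      simp only
      rw [Finset.mul_sum, ← Finset.sum_neg_distrib]
    rw [this, Usum_eq]
    ring
  rw [hsplit, hsecond, hfirst, lemB]
  ring

lemma FF_zero : FF 0 = 1 := by
  rw [FF]
  norm_num [leg3]

lemma qBinom00 : qBinom Q2 (0:ℤ) (0:ℤ) = 1 := by
  have := qBinom_zero_bot 0
  norm_num at this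
  exact this

lemma Tsum_zero : Tsum 0 = 1 := by
  rw [Tsum]
  have hzero : ∀ j : ℤ, j < 0 ∨ 0 < j →
      FF j * qBinom Q2 (2*((0:ℕ):ℤ)) (((0:ℕ):ℤ)+j) = 0 := by
    intro j hj
    rcases hj with h | h
    · rw [qBinom_eq_zero_of_neg (by omega)]; ring
    · rw [qBinom_eq_zero_of_gt (by omega)]; ring
  rw [sum_Icc_ext _ (show Icc (0:ℤ) 0 ⊆ Icc (-((0:ℕ):ℤ)-1) (((0:ℕ):ℤ)+1) by
      intro x; simp only [Finset.mem_Icc]; omega) hzero]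
  rw [Finset.Icc_self, Finset.sum_singleton]
  rw [show 2*((0:ℕ):ℤ) = (0:ℤ) by norm_num, show ((0:ℕ):ℤ)+0 = (0:ℤ) by norm_num]
  rw [qBinom00, FF_zero]
  norm_num

noncomputable def Pprod (L : ℕ) : RatFunc ℚ :=
  ∏ k ∈ range L, (1 + Xq^(2*k+1) + Xq^(2*k+1) * Xq^(2*k+1))

lemma Xq_zpow_nat (n : ℕ) : Xq^((n:ℤ)) = Xq^n := zpow_natCast _ _

lemma Tsum_eq (L : ℕ) : Tsum L = Pprod L := by
  induction L with
  | zero => rw [Tsum_zero, Pprod]; simp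
  | succ n ih =>
    rw [lemD, ih]
    conv_rhs => rw [Pprod, prod_range_succ]
    rw [← Pprod]
    rw [show 2*(n:ℤ)+1 = ((2*n+1 : ℕ):ℤ) by push_cast; ring, Xq_zpow_nat]
    ring

lemma Ssum_eq (L : ℕ) : Ssum L = (1 + Xq^(2*L+1)) * Pprod L := by
  rw [lemB, Tsum_eq, show 2*(L:ℤ)+1 = ((2*L+1 : ℕ):ℤ) by push_cast; ring, Xq_zpow_nat]

lemma rhs_eq (L : ℕ) :
    qPoch (Xq ^ 3) (Xq ^ 6) L / qPoch Xq (Xq ^ 2) (L + 1) * (1 - Xq ^ (2 * (1 + 2 * L)))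
      = (1 + Xq^(2*L+1)) * Pprod L := by
  have hA : qPoch Xq (Xq^2) (L+1) = (∏ k ∈ range L, (1 - Xq^(2*k+1))) * (1 - Xq^(2*L+1)) := by
    rw [qPoch, prod_range_succ]
    congr 1
    · refine Finset.prod_congr rfl (fun k _ => ?_)
      rw [show (Xq:RatFunc ℚ) * (Xq^2)^k = Xq^(2*k+1) by rw [← pow_mul, ← pow_succ']]
    · rw [show (Xq:RatFunc ℚ) * (Xq^2)^L = Xq^(2*L+1) by rw [← pow_mul, ← pow_succ']]
  have hB : qPoch (Xq^3) (Xq^6) L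
      = (∏ k ∈ range L, (1 - Xq^(2*k+1))) * Pprod L := by
    rw [qPoch, Pprod, ← Finset.prod_mul_distrib]
    refine Finset.prod_congr rfl (fun k _ => ?_)
    rw [show (Xq:RatFunc ℚ)^3 * (Xq^6)^k = Xq^(6*k+3) by rw [← pow_mul]; rw [← pow_add]; ring_nf]
    ring
  have hprod_ne : (∏ k ∈ range L, ((1:RatFunc ℚ) - Xq^(2*k+1))) ≠ 0 := by
    apply Finset.prod_ne_zero_iff.2
    intro k _
    exact one_sub_Xq_pow_ne_zero _ (by omega)
  have hlast_ne : (1:RatFunc ℚ) - Xq^(2*L+1) ≠ 0 := one_sub_Xq_pow_ne_zero _ (by omega)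
  have hfact : (1:RatFunc ℚ) - Xq^(2*(1+2*L)) = (1 - Xq^(2*L+1)) * (1 + Xq^(2*L+1)) := by
    rw [show 2*(1+2*L) = (2*L+1)+(2*L+1) by ring, pow_add]
    ring
  rw [hA, hB, hfact]
  field_simp

/-- Theorem 2.3: for `L ≥ 0`,
`∑_j (-1)^j q^{j²} ((j+1)/3) [2L+1 choose L+j]_{q²} = ((q³;q⁶)_L/(q;q²)_{L+1}) (1-q^{2(1+2L)})`.
The sum is taken over `-(L+1) ≤ j ≤ L+1`, which covers all nonzero terms. -/
theorem statement8 (L : ℕ) :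
    ∑ j ∈ Finset.Icc (-(L : ℤ) - 1) ((L : ℤ) + 1),
      (-1 : RatFunc ℚ) ^ j * Xq ^ (j ^ 2) * (leg3 (j + 1) : RatFunc ℚ) *
        qBinom (Xq ^ 2) (2 * L + 1) ((L : ℤ) + j) =
    qPoch (Xq ^ 3) (Xq ^ 6) L / qPoch Xq (Xq ^ 2) (L + 1) * (1 - Xq ^ (2 * (1 + 2 * L))) := by
  have h1 : Ssum L = ∑ j ∈ Finset.Icc (-(L : ℤ) - 1) ((L : ℤ) + 1),
      (-1 : RatFunc ℚ) ^ j * Xq ^ (j ^ 2) * (leg3 (j + 1) : RatFunc ℚ) *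
        qBinom (Xq ^ 2) (2 * L + 1) ((L : ℤ) + j) := by
    rw [Ssum]
    refine Finset.sum_congr rfl (fun j _ => ?_)
    rw [FF]
  rw [← h1, Ssum_eq, rhs_eq]
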